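/- For n ≥ 1, the descent generating polynomial of run-sorted permutations satisfies A_n(t) = 1 + ∑_{i=1}^{n-2} (C(n-1, i) − 1) t A_i(t), where A_n(t) = ∑_{σ ∈ RSP(n)} t^{des(σ)}. -/

import Mathlib

/-- Lexicographic (≤) comparison of lists of naturals, as a `Bool`. -/
def lexLe : List ℕ → List ℕ → Bool
  | [], _ => true
  | _ :: _, [] => false
  | a :: as, b :: bs => decide (a < b) || (a == b && lexLe as bs)

/-- Split a word into its maximal (weakly) increasing runs. -/
def splitRuns : List ℕ → List (List ℕ)
  | [] => []
  | [x] => [[x]]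
  | x :: y :: rest =>
    match splitRuns (y :: rest) with
    | [] => [[x]]
    | r :: rs => if x ≤ y then (x :: r) :: rs else [x] :: r :: rs

/-- Rearrange the maximal increasing runs of a word in lexicographic order. -/
def runsort (w : List ℕ) : List ℕ := ((splitRuns w).mergeSort lexLe).flatten

/-- A word is run-sorted if its runs already appear in lexicographic order. -/
def IsRunSorted (w : List ℕ) : Prop := runsort w = w

instance : DecidablePred IsRunSorted := fun w => inferInstanceAs (Decidable (runsort w = w))

/-- The number of descents of a word: positions k (0-indexed) with w(k) > w(k+1). -/
def des (w : List ℕ) : ℕ := ((w.zip w.tail).filter fun p => decide (p.2 < p.1)).length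

-- basic lexLe
theorem lexLe_trans : ∀ (a b c : List ℕ), lexLe a b → lexLe b c → lexLe a c
  | [], _, _, _, _ => by simp [lexLe]
  | _ :: _, [], _, h, _ => by simp [lexLe] at h
  | _ :: _, _ :: _, [], _, h => by simp [lexLe] at h
  | a :: as, b :: bs, c :: cs, h1, h2 => by
    simp only [lexLe, Bool.or_eq_true, decide_eq_true_eq, Bool.and_eq_true, beq_iff_eq] at *
    rcases h1 with h1 | ⟨rfl, h1⟩
    · rcases h2 with h2 | ⟨rfl, h2⟩
      · exact Or.inl (h1.trans h2)
      · exact Or.inl h1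
    · rcases h2 with h2 | ⟨rfl, h2⟩
      · exact Or.inl h2
      · exact Or.inr ⟨rfl, lexLe_trans _ _ _ h1 h2⟩

theorem lexLe_total : ∀ (a b : List ℕ), lexLe a b || lexLe b a
  | [], _ => by simp [lexLe]
  | _ :: _, [] => by simp [lexLe]
  | a :: as, b :: bs => by
    simp only [lexLe, Bool.or_eq_true, decide_eq_true_eq, Bool.and_eq_true, beq_iff_eq]
    rcases Nat.lt_trichotomy a b with h | h | h
    · tauto
    · subst h
      have := lexLe_total as bs
      simp only [Bool.or_eq_true] at this
      tauto
    · tauto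

theorem lexLe_of_head_lt {a b : ℕ} {as bs : List ℕ} (h : a < b) : lexLe (a :: as) (b :: bs) := by
  simp [lexLe, h]

theorem head_lt_of_lexLe {a b : ℕ} {as bs : List ℕ} (h : lexLe (a :: as) (b :: bs))
    (hne : a ≠ b) : a < b := by
  simp only [lexLe, Bool.or_eq_true, decide_eq_true_eq, Bool.and_eq_true, beq_iff_eq] at h
  tauto


-- basic splitRuns
theorem splitRuns_cons_eq (x y : ℕ) (rest : List ℕ) {r : List ℕ} {rs : List (List ℕ)}
    (h : splitRuns (y :: rest) = r :: rs) :
    splitRuns (x :: y :: rest) = if x ≤ y then (x :: r) :: rs else [x] :: r :: rs := by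
  rw [splitRuns, h]

theorem splitRuns_cons_exists (x y : ℕ) (rest : List ℕ) :
    ∃ r rs, splitRuns (y :: rest) = r :: rs := by
  rcases h : splitRuns (y :: rest) with _ | ⟨r, rs⟩
  · exfalso
    match rest with
    | [] => simp [splitRuns] at h
    | z :: rest' =>
      rw [splitRuns] at h
      split at h
      · simp at h
      · split at h <;> simp at h
  · exact ⟨r, rs, rfl⟩

theorem splitRuns_cons_ne_nil (x : ℕ) (xs : List ℕ) : splitRuns (x :: xs) ≠ [] := by
  match xs with
  | [] => simp [splitRuns]
  | y :: rest =>
    obtain ⟨r, rs, h⟩ := splitRuns_cons_exists x y rest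
    rw [splitRuns_cons_eq x y rest h]
    split <;> simp

theorem flatten_splitRuns : ∀ (w : List ℕ), (splitRuns w).flatten = w
  | [] => rfl
  | [x] => rfl
  | x :: y :: rest => by
    have ih := flatten_splitRuns (y :: rest)
    obtain ⟨r, rs, h⟩ := splitRuns_cons_exists x y rest
    rw [h] at ih
    rw [splitRuns_cons_eq x y rest h]
    split <;> simpa using ih

theorem ne_nil_of_mem_splitRuns : ∀ {w : List ℕ} {r : List ℕ}, r ∈ splitRuns w → r ≠ []
  | [], r, h => by simp [splitRuns] at h
  | [x], r, h => by simp [splitRuns] at h; simp [h]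
  | x :: y :: rest, r, h => by
    obtain ⟨s, rs, h'⟩ := splitRuns_cons_exists x y rest
    rw [splitRuns_cons_eq x y rest h'] at h
    split at h
    · rcases List.mem_cons.1 h with rfl | h
      · simp
      · exact ne_nil_of_mem_splitRuns (w := y :: rest) (h' ▸ List.mem_cons_of_mem _ h)
    · rcases List.mem_cons.1 h with rfl | h
      · simp
      · exact ne_nil_of_mem_splitRuns (w := y :: rest) (h' ▸ h)

theorem head?_first_splitRuns {y : ℕ} {rest : List ℕ} {s : List ℕ} {rs : List (List ℕ)}
    (h : splitRuns (y :: rest) = s :: rs) : s.head? = some y := by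
  have hfl := flatten_splitRuns (y :: rest)
  rw [h] at hfl
  have hsne : s ≠ [] := ne_nil_of_mem_splitRuns (h ▸ List.mem_cons_self)
  rcases s with _ | ⟨a, s'⟩
  · exact absurd rfl hsne
  · simp at hfl; simp [hfl.1]

theorem chain_of_mem_splitRuns : ∀ {w : List ℕ} {r : List ℕ}, r ∈ splitRuns w →
    r.IsChain (· ≤ ·)
  | [], r, h => by simp [splitRuns] at h
  | [x], r, h => by simp [splitRuns] at h; simp [h]
  | x :: y :: rest, r, h => by
    obtain ⟨s, rs, h'⟩ := splitRuns_cons_exists x y rest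
    have hs : s ∈ splitRuns (y :: rest) := h' ▸ List.mem_cons_self
    have hshead : s.head? = some y := head?_first_splitRuns h'
    rw [splitRuns_cons_eq x y rest h'] at h
    split at h
    · rcases List.mem_cons.1 h with rfl | h
      · have hch := chain_of_mem_splitRuns (w := y :: rest) hs
        rcases s with _ | ⟨a, s'⟩
        · simp
        · have hay : a = y := by simpa using hshead
          exact List.isChain_cons_cons.2 ⟨by omega, hch⟩
      · exact chain_of_mem_splitRuns (w := y :: rest) (h' ▸ List.mem_cons_of_mem _ h)
    · rcases List.mem_cons.1 h with rfl | h
      · simp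
      · exact chain_of_mem_splitRuns (w := y :: rest) (h' ▸ h)

/-- Relation between adjacent runs: last of first exceeds head of second. -/
def Rdesc (r s : List ℕ) : Prop := ∀ a ∈ r.getLast?, ∀ b ∈ s.head?, b < a

theorem rdesc_cons {x : ℕ} {s t : List ℕ} (hs : s ≠ []) (h : Rdesc s t) : Rdesc (x :: s) t := by
  intro a ha b hb
  rcases s with _ | ⟨c, s'⟩
  · exact absurd rfl hs
  · rw [List.getLast?_cons_cons] at ha
    exact h a ha b hb

theorem rdesc_cons_iff {x : ℕ} {s t : List ℕ} (hs : s ≠ []) : Rdesc (x :: s) t ↔ Rdesc s t := by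
  constructor
  · intro h a ha b hb
    rcases s with _ | ⟨c, s'⟩
    · exact absurd rfl hs
    · exact h a (by rw [List.getLast?_cons_cons]; exact ha) b hb
  · exact rdesc_cons hs

theorem splitRuns_desc : ∀ (w : List ℕ), (splitRuns w).IsChain Rdesc
  | [] => by simp [splitRuns]
  | [x] => by simp [splitRuns]
  | x :: y :: rest => by
    have ih := splitRuns_desc (y :: rest)
    obtain ⟨s, rs, h⟩ := splitRuns_cons_exists x y rest
    rw [h] at ih
    rw [splitRuns_cons_eq x y rest h]
    have hsne : s ≠ [] := ne_nil_of_mem_splitRuns (h ▸ List.mem_cons_self)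
    have hsh := head?_first_splitRuns h
    split
    · rcases List.isChain_cons.1 ih with ⟨h1, h2⟩
      exact List.isChain_cons.2 ⟨fun hd hhd => rdesc_cons hsne (h1 hd hhd), h2⟩
    · refine List.isChain_cons.2 ⟨?_, ih⟩
      intro hd hhd a ha b hb
      simp only [List.head?_cons, Option.mem_def, Option.some.injEq] at hhd
      subst hhd
      simp only [List.getLast?_singleton, Option.mem_def, Option.some.injEq] at ha
      subst ha
      rw [hsh] at hb
      simp only [Option.mem_def, Option.some.injEq] at hb
      subst hb
      omega

theorem splitRuns_of_chain : ∀ (w : List ℕ), w ≠ [] → w.IsChain (· ≤ ·) → splitRuns w = [w]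
  | [], h, _ => absurd rfl h
  | [x], _, _ => rfl
  | x :: y :: rest, _, hc => by
    rcases List.isChain_cons_cons.1 hc with ⟨hxy, hc'⟩
    rw [splitRuns_cons_eq x y rest (splitRuns_of_chain (y :: rest) (by simp) hc'), if_pos hxy]

theorem splitRuns_append : ∀ (r : List ℕ), r ≠ [] → r.IsChain (· ≤ ·) →
    ∀ (b : ℕ) (v : List ℕ), (∀ a ∈ r.getLast?, b < a) →
    splitRuns (r ++ b :: v) = r :: splitRuns (b :: v)
  | [], hr, _, _, _, _ => absurd rfl hr
  | [x], _, _, b, v, hlt => by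
    obtain ⟨s, rs, h⟩ := splitRuns_cons_exists x b v
    have hbx : b < x := hlt x (by simp)
    rw [List.singleton_append, splitRuns_cons_eq x b v h, if_neg (by omega), h]
  | x :: x' :: r', _, hc, b, v, hlt => by
    rcases List.isChain_cons_cons.1 hc with ⟨hxx', hc'⟩
    have ih := splitRuns_append (x' :: r') (by simp) hc' b v
      (by intro a ha; exact hlt a (by rwa [List.getLast?_cons_cons]))
    have : (x' :: r') ++ b :: v = x' :: (r' ++ b :: v) := by simp
    rw [this] at ih
    show splitRuns (x :: x' :: (r' ++ b :: v)) = _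
    rw [splitRuns_cons_eq x x' (r' ++ b :: v) ih, if_pos hxx']

theorem splitRuns_flatten : ∀ (l : List (List ℕ)), (∀ r ∈ l, r ≠ []) →
    (∀ r ∈ l, r.IsChain (· ≤ ·)) → l.IsChain Rdesc → splitRuns l.flatten = l
  | [], _, _, _ => rfl
  | [r], h1, h2, _ => by
    simpa using splitRuns_of_chain r (h1 r (by simp)) (h2 r (by simp))
  | r :: s :: l, h1, h2, h3 => by
    have hsne : s ≠ [] := h1 s (by simp)
    rcases s with _ | ⟨b, s'⟩
    · exact absurd rfl hsne
    have hrd : Rdesc r (b :: s') := (List.isChain_cons.1 h3).1 _ rfl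
    have hrne : r ≠ [] := h1 r (by simp)
    have ih := splitRuns_flatten ((b :: s') :: l) (fun t ht => h1 t (List.mem_cons_of_mem _ ht))
      (fun t ht => h2 t (List.mem_cons_of_mem _ ht)) ((List.isChain_cons.1 h3).2
       )
    have hfl : (r :: (b :: s') :: l).flatten = r ++ (b :: (s' ++ l.flatten)) := by simp
    rw [hfl, splitRuns_append r hrne (h2 r (by simp)) _ _ ?_]
    · have : b :: (s' ++ l.flatten) = ((b :: s') :: l).flatten := by simp
      rw [this, ih]
    · intro a ha
      exact hrd a ha b rfl

theorem des_cons_cons (x y : ℕ) (l : List ℕ) :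
    des (x :: y :: l) = (if y < x then 1 else 0) + des (y :: l) := by
  simp only [des, List.tail_cons, List.zip_cons_cons, List.filter_cons]
  by_cases h : y < x <;> simp [h, Nat.add_comm]

theorem des_add_one : ∀ (w : List ℕ), w ≠ [] → des w + 1 = (splitRuns w).length
  | [], h => absurd rfl h
  | [x], _ => by simp [des, splitRuns]
  | x :: y :: rest, _ => by
    have ih := des_add_one (y :: rest) (by simp)
    obtain ⟨s, rs, h⟩ := splitRuns_cons_exists x y rest
    rw [h] at ih
    rw [des_cons_cons, splitRuns_cons_eq x y rest h]
    split <;> rename_i hxy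
    · rw [if_neg (by omega)]
      simp only [List.length_cons] at ih ⊢
      omega
    · rw [if_pos (by omega)]
      simp only [List.length_cons] at ih ⊢
      omega

theorem eq_of_perm_of_flatten_eq : ∀ (l₁ l₂ : List (List ℕ)), l₁.Perm l₂ →
    l₁.flatten = l₂.flatten → l₁.flatten.Nodup → (∀ r ∈ l₁, r ≠ []) → l₁ = l₂
  | [], l₂, hp, _, _, _ => (hp.nil_eq).symm ▸ rfl
  | a :: t₁, [], hp, _, _, _ => by simpa using hp.eq_nil
  | a :: t₁, b :: t₂, hp, hfl, hnd, hne => by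
    have ha : a ≠ [] := hne a (by simp)
    have hb : b ≠ [] := by
      have : b ∈ a :: t₁ := hp.mem_iff.2 (by simp)
      exact hne b this
    by_cases hab : a = b
    · subst hab
      have ht : t₁.flatten = t₂.flatten := by
        simp only [List.flatten_cons] at hfl
        exact List.append_cancel_left hfl
      have := eq_of_perm_of_flatten_eq t₁ t₂ (hp.cons_inv) ht
        (by simp only [List.flatten_cons] at hnd; exact (List.nodup_append.1 hnd).2.1)
        (fun r hr => hne r (List.mem_cons_of_mem _ hr))
      rw [this]
    · exfalso
      rcases a with _ | ⟨a₀, a'⟩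
      · exact ha rfl
      rcases b with _ | ⟨b₀, b'⟩
      · exact hb rfl
      have hhead : a₀ = b₀ := by
        simp only [List.flatten_cons, List.cons_append] at hfl
        exact (List.cons.injEq .. ▸ hfl).1
      have hat₂ : (a₀ :: a') ∈ t₂ := by
        have h2 : (a₀ :: a') ∈ (b₀ :: b') :: t₂ := hp.mem_iff.1 (by simp)
        rcases List.mem_cons.1 h2 with h2 | h2
        · exact absurd h2 hab
        · exact h2
      have ha₀ : a₀ ∈ t₂.flatten := List.mem_flatten.2 ⟨_, hat₂, by simp⟩
      have hnd2 : ((b₀ :: b') ++ t₂.flatten).Nodup := by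
        have := hfl ▸ hnd
        simpa using this
      rw [List.nodup_append] at hnd2
      exact hnd2.2.2 a₀ (by rw [hhead]; exact List.mem_cons_self) a₀ ha₀ rfl

theorem isRunSorted_iff {w : List ℕ} (hw : w.Nodup) :
    IsRunSorted w ↔ (splitRuns w).Pairwise (fun r s => lexLe r s) := by
  constructor
  · intro h
    have hperm : ((splitRuns w).mergeSort lexLe).Perm (splitRuns w) :=
      List.mergeSort_perm _ _
    have hfl : ((splitRuns w).mergeSort lexLe).flatten = (splitRuns w).flatten := by
      rw [flatten_splitRuns]; exact h
    have heq : (splitRuns w).mergeSort lexLe = splitRuns w :=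
      eq_of_perm_of_flatten_eq _ _ hperm hfl
        (by rw [hfl, flatten_splitRuns]; exact hw)
        (fun r hr => ne_nil_of_mem_splitRuns (hperm.mem_iff.1 hr))
    have := List.pairwise_mergeSort (le := lexLe)
      (fun a b c => lexLe_trans a b c) (fun a b => lexLe_total a b) (splitRuns w)
    rwa [heq] at this
  · intro h
    show ((splitRuns w).mergeSort lexLe).flatten = w
    rw [List.mergeSort_of_pairwise h, flatten_splitRuns]

/-- In a run decomposition, the head of each run is its minimum. -/
theorem head_le_of_mem_chain : ∀ {r : List ℕ}, r.IsChain (· ≤ ·) → ∀ x ∈ r, ∀ h ∈ r.head?, h ≤ x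
  | [], _, x, hx, _, _ => by simp at hx
  | a :: t, hc, x, hx, h, hh => by
    simp only [List.head?_cons, Option.mem_def, Option.some.injEq] at hh
    subst hh
    rcases List.mem_cons.1 hx with rfl | hx
    · exact le_refl x
    · rcases t with _ | ⟨b, t'⟩
      · simp at hx
      · rcases List.isChain_cons_cons.1 hc with ⟨hab, hc'⟩
        exact hab.trans (head_le_of_mem_chain hc' x hx b rfl)

/-- The head of a run-sorted nodup word is its strict minimum. -/
theorem head_lt_of_runSorted {w : List ℕ} (hw : w.Nodup) (hrs : IsRunSorted w) :
    ∀ x ∈ w, ∀ h ∈ w.head?, h = x ∨ h < x := by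
  intro x hx h hh
  by_cases hxh : h = x
  · exact Or.inl hxh
  right
  have hpw := (isRunSorted_iff hw).1 hrs
  -- x belongs to some run r; h is the head of the first run
  have hx' : x ∈ (splitRuns w).flatten := by rw [flatten_splitRuns]; exact hx
  obtain ⟨r, hr, hxr⟩ := List.mem_flatten.1 hx'
  rcases w with _ | ⟨w₀, w'⟩
  · simp at hx
  simp only [List.head?_cons, Option.mem_def, Option.some.injEq] at hh
  subst hh
  obtain ⟨s, rs, hsr⟩ := splitRuns_cons_exists 0 w₀ w'
  have hsh : s.head? = some w₀ := head?_first_splitRuns hsr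
  have hrmem : r ∈ s :: rs := hsr ▸ hr
  have hchain_r := chain_of_mem_splitRuns hr
  rcases List.mem_cons.1 hrmem with rfl | hrtl
  · -- x in the first run; head of r = w₀ ≤ x
    have := head_le_of_mem_chain hchain_r x hxr w₀ hsh
    omega
  · -- r is a later run: lexLe s r, heads distinct
    have hlex : lexLe s r := by
      rw [hsr] at hpw
      exact (List.pairwise_cons.1 hpw).1 r hrtl
    have hrne : r ≠ [] := ne_nil_of_mem_splitRuns hr
    rcases r with _ | ⟨r₀, r'⟩
    · exact absurd rfl hrne
    rcases s with _ | ⟨s₀, s'⟩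
    · simp at hsh
    simp only [List.head?_cons, Option.some.injEq] at hsh
    have hsh' : w₀ = s₀ := hsh.symm
    subst hsh'
    -- w₀ ≠ r₀ since w nodup : w₀ appears in s, r₀ in a later run... use nodup of flatten
    have hne : w₀ ≠ r₀ := by
      intro hcon
      have hndf : ((w₀ :: s') :: rs).flatten.Nodup := by
        rw [← hsr, flatten_splitRuns]
        exact hw
      simp only [List.flatten_cons, List.nodup_append] at hndf
      rcases hndf with ⟨-, -, hdisj⟩
      exact hdisj w₀ (List.mem_cons_self) w₀
        (List.mem_flatten.2 ⟨_, hrtl, by rw [hcon]; exact List.mem_cons_self⟩) rfl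
    have hw₀r₀ : w₀ < r₀ := head_lt_of_lexLe hlex hne
    have : r₀ ≤ x := by
      have := head_le_of_mem_chain hchain_r x hxr r₀ rfl
      omega
    omega

theorem mem_of_mem_splitRuns {w r : List ℕ} (hr : r ∈ splitRuns w) {x : ℕ} (hx : x ∈ r) :
    x ∈ w := by
  rw [← flatten_splitRuns w]
  exact List.mem_flatten.2 ⟨r, hr, hx⟩

section Map

variable {f : ℕ → ℕ}

theorem splitRuns_map : ∀ (w : List ℕ), (∀ x ∈ w, ∀ y ∈ w, (x < y ↔ f x < f y)) →
    splitRuns (w.map f) = (splitRuns w).map (List.map f)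
  | [], _ => rfl
  | [x], _ => rfl
  | x :: y :: rest, hlt => by
    obtain ⟨s, rs, h⟩ := splitRuns_cons_exists x y rest
    have ih := splitRuns_map (y :: rest) (fun a ha b hb =>
      hlt a (List.mem_cons_of_mem _ ha) b (List.mem_cons_of_mem _ hb))
    rw [h] at ih
    simp only [List.map_cons] at ih ⊢
    rw [splitRuns_cons_eq (f x) (f y) (rest.map f) ih,
      splitRuns_cons_eq x y rest h]
    have hxy : x ≤ y ↔ f x ≤ f y := by
      have h1 := hlt x (by simp) y (by simp)
      have h2 := hlt y (by simp) x (by simp)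
      omega
    by_cases hc : x ≤ y
    · rw [if_pos hc, if_pos (hxy.1 hc)]
      simp
    · rw [if_neg hc, if_neg (fun hcon => hc (hxy.2 hcon))]
      simp

theorem des_map : ∀ (w : List ℕ), (∀ x ∈ w, ∀ y ∈ w, (x < y ↔ f x < f y)) →
    des (w.map f) = des w
  | [] , _ => rfl
  | [x], _ => rfl
  | x :: y :: rest, hlt => by
    have ih := des_map (y :: rest) (fun a ha b hb =>
      hlt a (List.mem_cons_of_mem _ ha) b (List.mem_cons_of_mem _ hb))
    simp only [List.map_cons] at ih ⊢
    rw [des_cons_cons, des_cons_cons, ih]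
    have h2 := hlt y (by simp) x (by simp)
    by_cases hc : y < x
    · rw [if_pos hc, if_pos (h2.1 hc)]
    · rw [if_neg hc, if_neg (fun hcon => hc (h2.2 hcon))]

theorem lexLe_map : ∀ (a b : List ℕ),
    (∀ x ∈ a, ∀ y ∈ b, (x < y ↔ f x < f y) ∧ (y < x ↔ f y < f x)) →
    lexLe (a.map f) (b.map f) = lexLe a b
  | [], b, _ => by simp [lexLe]
  | a :: as, [], _ => by simp [lexLe]
  | x :: as, y :: bs, h => by
    have hh := h x (by simp) y (by simp)
    have ih := lexLe_map as bs (fun a ha b hb =>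
      h a (List.mem_cons_of_mem _ ha) b (List.mem_cons_of_mem _ hb))
    simp only [List.map_cons, lexLe]
    rcases Nat.lt_trichotomy x y with hxy | rfl | hxy
    · have h1 : f x < f y := hh.1.1 hxy
      have hd1 : decide (x < y) = true := by simpa using hxy
      have hd2 : decide (f x < f y) = true := by simpa using h1
      rw [hd1, hd2]; simp
    · simp [ih]
    · have h1 : f y < f x := hh.2.1 hxy
      have hh2 : ¬ (x < y) := by omega
      have h2 : ¬ (f x < f y) := by omega
      have h3 : f x ≠ f y := by omega
      have h4 : x ≠ y := by omega
      have hb1 : (f x == f y) = false := by simpa using h3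
      have hb2 : (x == y) = false := by simpa using h4
      have hd1 : decide (x < y) = false := by simpa using hh2
      have hd2 : decide (f x < f y) = false := by simpa using h2
      rw [hb1, hb2, hd1, hd2]; simp

theorem isRunSorted_map {w : List ℕ} (hw : w.Nodup)
    (hlt : ∀ x ∈ w, ∀ y ∈ w, (x < y ↔ f x < f y)) :
    IsRunSorted (w.map f) ↔ IsRunSorted w := by
  have hinj : ∀ x ∈ w, ∀ y ∈ w, f x = f y → x = y := by
    intro x hx y hy hf
    rcases Nat.lt_trichotomy x y with h | h | h
    · exact absurd ((hlt x hx y hy).1 h) (by omega)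
    · exact h
    · exact absurd ((hlt y hy x hx).1 h) (by omega)
  have hwnd : (w.map f).Nodup := hw.map_on hinj
  rw [isRunSorted_iff hwnd, isRunSorted_iff hw, splitRuns_map w hlt, List.pairwise_map]
  constructor
  · refine List.Pairwise.imp_of_mem ?_
    intro r s hr hs hrs
    rw [← lexLe_map r s ?_]
    · exact hrs
    · intro x hx y hy
      exact ⟨hlt x (mem_of_mem_splitRuns hr hx) y (mem_of_mem_splitRuns hs hy),
        hlt y (mem_of_mem_splitRuns hs hy) x (mem_of_mem_splitRuns hr hx)⟩
  · refine List.Pairwise.imp_of_mem ?_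
    intro r s hr hs hrs
    rw [lexLe_map r s ?_]
    · exact hrs
    · intro x hx y hy
      exact ⟨hlt x (mem_of_mem_splitRuns hr hx) y (mem_of_mem_splitRuns hs hy),
        hlt y (mem_of_mem_splitRuns hs hy) x (mem_of_mem_splitRuns hr hx)⟩

end Map

/-- The one-line notation word (with values 1,…,n) of a permutation of `Fin n`. -/
def permWord {n : ℕ} (σ : Equiv.Perm (Fin n)) : List ℕ := List.ofFn fun i => (σ i : ℕ) + 1

/-- The descent generating polynomial of run-sorted permutations of `[n]`. -/
noncomputable def A (n : ℕ) : Polynomial ℝ :=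
  ∑ σ ∈ Finset.univ.filter (fun σ : Equiv.Perm (Fin n) => IsRunSorted (permWord σ)),
    Polynomial.X ^ des (permWord σ)

/-- The words (lists) that are rearrangements of the elements of `S`. -/
def words (S : Finset ℕ) : Finset (List ℕ) := (S.sort (· ≤ ·)).permutations.toFinset

theorem mem_words {S : Finset ℕ} {w : List ℕ} : w ∈ words S ↔ w.Perm (S.sort (· ≤ ·)) := by
  rw [words, List.mem_toFinset, List.mem_permutations]

theorem nodup_of_mem_words {S : Finset ℕ} {w : List ℕ} (h : w ∈ words S) : w.Nodup :=
  (mem_words.1 h).nodup_iff.2 (S.sort_nodup _)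

theorem toFinset_of_mem_words {S : Finset ℕ} {w : List ℕ} (h : w ∈ words S) :
    w.toFinset = S := by
  rw [List.toFinset_eq_of_perm _ _ (mem_words.1 h), Finset.sort_toFinset]

theorem mem_words_iff {S : Finset ℕ} {w : List ℕ} :
    w ∈ words S ↔ w.Nodup ∧ w.toFinset = S := by
  constructor
  · exact fun h => ⟨nodup_of_mem_words h, toFinset_of_mem_words h⟩
  · rintro ⟨h1, h2⟩
    exact mem_words.2 (List.perm_of_nodup_nodup_toFinset_eq h1 (S.sort_nodup _)
      (by rw [h2, Finset.sort_toFinset]))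

theorem mem_of_mem_words {S : Finset ℕ} {w : List ℕ} (h : w ∈ words S) {x : ℕ} (hx : x ∈ w) :
    x ∈ S := by
  rw [← toFinset_of_mem_words h]
  exact List.mem_toFinset.2 hx

theorem length_of_mem_words {S : Finset ℕ} {w : List ℕ} (h : w ∈ words S) :
    w.length = S.card := by
  rw [(mem_words.1 h).length_eq, Finset.length_sort]

/-- Sum of `X^des` over run-sorted words on support `S`. -/
noncomputable def P (S : Finset ℕ) : Polynomial ℝ :=
  ∑ w ∈ (words S).filter IsRunSorted, Polynomial.X ^ des w

theorem A_eq_P (n : ℕ) : A n = P (Finset.Icc 1 n) := by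
  classical
  rw [A, P]
  refine Finset.sum_bij (fun σ _ => permWord σ) ?_ ?_ ?_ ?_
  · -- maps to
    intro σ hσ
    rw [Finset.mem_filter] at hσ ⊢
    refine ⟨?_, hσ.2⟩
    rw [mem_words_iff]
    constructor
    · exact List.nodup_ofFn.2 (fun i j h => σ.injective (Fin.val_injective (by omega)))
    · ext x
      simp only [List.mem_toFinset, permWord, List.mem_ofFn, Finset.mem_Icc]
      constructor
      · rintro ⟨i, rfl⟩
        have := (σ i).isLt
        beta_reduce
        omega
      · rintro ⟨h1, h2⟩
        refine ⟨σ.symm ⟨x - 1, by omega⟩, ?_⟩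
        beta_reduce
        rw [Equiv.apply_symm_apply]
        simp only [Fin.val_mk]
        omega
  · -- injective
    intro σ₁ h₁ σ₂ h₂ h
    have := List.ofFn_injective h
    ext i
    have := congrFun this i
    simpa using congrArg (fun t : ℕ => (t - 1 : ℕ)) this
  · -- surjective
    intro w hw
    rw [Finset.mem_filter] at hw
    obtain ⟨hw1, hw2⟩ := hw
    have hlen : w.length = n := by rw [length_of_mem_words hw1, Nat.card_Icc]; omega
    have hval : ∀ i : Fin w.length, 1 ≤ w.get i ∧ w.get i ≤ n := by
      intro i
      have := mem_of_mem_words hw1 (List.get_mem w i)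
      rw [Finset.mem_Icc] at this
      exact this
    have hnd := nodup_of_mem_words hw1
    set g : Fin n → Fin n := fun i => ⟨w.get (i.cast hlen.symm) - 1, by
      have := hval (i.cast hlen.symm); omega⟩ with hg
    have hginj : Function.Injective g := by
      intro i j hij
      have h1 := hval (i.cast hlen.symm)
      have h2 := hval (j.cast hlen.symm)
      have : w.get (i.cast hlen.symm) = w.get (j.cast hlen.symm) := by
        have := congrArg Fin.val hij
        simp only [hg] at this
        omega
      have h3 := (hnd.get_inj_iff).1 this
      have h4 := congrArg Fin.val h3
      simp only [Fin.coe_cast] at h4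
      exact Fin.val_injective h4
    have hpw : permWord (Equiv.ofBijective g (Finite.injective_iff_bijective.1 hginj)) = w := by
      apply List.ext_get (by simp [permWord, hlen])
      intro i h1 h2
      simp only [permWord, List.get_ofFn, Equiv.ofBijective_apply, hg, Fin.cast_mk]
      have := hval ⟨i, h2⟩
      simp only [List.get_eq_getElem, Fin.coe_cast] at this ⊢
      omega
    refine ⟨Equiv.ofBijective g (Finite.injective_iff_bijective.1 hginj), ?_, hpw⟩
    rw [Finset.mem_filter]
    refine ⟨Finset.mem_univ _, ?_⟩
    rw [hpw]
    exact hw2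
  · intro σ hσ
    rfl

theorem P_congr {S T : Finset ℕ} (hST : S.card = T.card) : P S = P T := by
  classical
  let eS := S.orderIsoOfFin (rfl : S.card = S.card)
  let eT := T.orderIsoOfFin hST.symm
  set f : ℕ → ℕ := fun x => if hx : x ∈ S then (eT (eS.symm ⟨x, hx⟩) : ℕ) else 0 with hf
  set g : ℕ → ℕ := fun x => if hx : x ∈ T then (eS (eT.symm ⟨x, hx⟩) : ℕ) else 0 with hg
  have hfS : ∀ x (hx : x ∈ S), f x = (eT (eS.symm ⟨x, hx⟩) : ℕ) := fun x hx => dif_pos hx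
  have hgT : ∀ y (hy : y ∈ T), g y = (eS (eT.symm ⟨y, hy⟩) : ℕ) := fun y hy => dif_pos hy
  have hfmem : ∀ x ∈ S, f x ∈ T := fun x hx => by rw [hfS x hx]; exact (eT _).2
  have hgmem : ∀ y ∈ T, g y ∈ S := fun y hy => by rw [hgT y hy]; exact (eS _).2
  have hgf : ∀ x ∈ S, g (f x) = x := by
    intro x hx
    rw [hgT _ (hfmem x hx)]
    have : (⟨f x, hfmem x hx⟩ : {y // y ∈ T}) = eT (eS.symm ⟨x, hx⟩) :=
      Subtype.ext (hfS x hx)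
    rw [this, OrderIso.symm_apply_apply, OrderIso.apply_symm_apply]
  have hfg : ∀ y ∈ T, f (g y) = y := by
    intro y hy
    rw [hfS _ (hgmem y hy)]
    have : (⟨g y, hgmem y hy⟩ : {x // x ∈ S}) = eS (eT.symm ⟨y, hy⟩) :=
      Subtype.ext (hgT y hy)
    rw [this, OrderIso.symm_apply_apply, OrderIso.apply_symm_apply]
  have hflt : ∀ x ∈ S, ∀ y ∈ S, (x < y ↔ f x < f y) := by
    intro x hx y hy
    rw [hfS x hx, hfS y hy]
    rw [Subtype.coe_lt_coe, OrderIso.lt_iff_lt, OrderIso.lt_iff_lt, Subtype.mk_lt_mk]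
  have hglt : ∀ x ∈ T, ∀ y ∈ T, (x < y ↔ g x < g y) := by
    intro x hx y hy
    rw [hgT x hx, hgT y hy]
    rw [Subtype.coe_lt_coe, OrderIso.lt_iff_lt, OrderIso.lt_iff_lt, Subtype.mk_lt_mk]
  -- transfer of word membership
  have key : ∀ (S' T' : Finset ℕ) (f' g' : ℕ → ℕ),
      (∀ x ∈ S', f' x ∈ T') → (∀ y ∈ T', g' y ∈ S') → (∀ y ∈ T', f' (g' y) = y) →
      (∀ x ∈ S', ∀ y ∈ S', (x < y ↔ f' x < f' y)) →
      ∀ w ∈ words S', w.map f' ∈ words T' := by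
    intro S' T' f' g' hmem hmem' hfg' hlt' w hw
    have hwS := toFinset_of_mem_words hw
    have hmemw : ∀ x ∈ w, x ∈ S' := fun x hx => mem_of_mem_words hw hx
    rw [mem_words_iff]
    constructor
    · refine (nodup_of_mem_words hw).map_on ?_
      intro x hx y hy hxy
      rcases Nat.lt_trichotomy x y with hc | hc | hc
      · exact absurd ((hlt' x (hmemw x hx) y (hmemw y hy)).1 hc) (by omega)
      · exact hc
      · exact absurd ((hlt' y (hmemw y hy) x (hmemw x hx)).1 hc) (by omega)
    · ext y
      simp only [List.mem_toFinset, List.mem_map]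
      constructor
      · rintro ⟨x, hx, rfl⟩
        exact hmem x (hmemw x hx)
      · intro hy
        refine ⟨g' y, ?_, hfg' y hy⟩
        have : g' y ∈ w.toFinset := by rw [hwS]; exact hmem' y hy
        exact List.mem_toFinset.1 this
  rw [P, P]
  refine Finset.sum_bij (fun w _ => w.map f) ?_ ?_ ?_ ?_
  · intro w hw
    rw [Finset.mem_filter] at hw ⊢
    have hmemw : ∀ x ∈ w, x ∈ S := fun x hx => mem_of_mem_words hw.1 hx
    refine ⟨key S T f g hfmem hgmem hfg hflt w hw.1, ?_⟩
    rw [isRunSorted_map (nodup_of_mem_words hw.1)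
      (fun x hx y hy => hflt x (hmemw x hx) y (hmemw y hy))]
    exact hw.2
  · intro w₁ h₁ w₂ h₂ h
    rw [Finset.mem_filter] at h₁ h₂
    have e₁ : (w₁.map f).map g = w₁ := by
      rw [List.map_map]
      have : ∀ x ∈ w₁, (g ∘ f) x = x := fun x hx => hgf x (mem_of_mem_words h₁.1 hx)
      rw [List.map_congr_left this, List.map_id']
    have e₂ : (w₂.map f).map g = w₂ := by
      rw [List.map_map]
      have : ∀ x ∈ w₂, (g ∘ f) x = x := fun x hx => hgf x (mem_of_mem_words h₂.1 hx)
      rw [List.map_congr_left this, List.map_id']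
    rw [← e₁, ← e₂]
    exact congrArg (List.map g) h
  · intro v hv
    rw [Finset.mem_filter] at hv
    have hmemv : ∀ y ∈ v, y ∈ T := fun y hy => mem_of_mem_words hv.1 hy
    have hvS : v.map g ∈ words S := key T S g f hgmem hfmem hgf hglt v hv.1
    have e : (v.map g).map f = v := by
      rw [List.map_map]
      have : ∀ y ∈ v, (f ∘ g) y = y := fun y hy => hfg y (hmemv y hy)
      rw [List.map_congr_left this, List.map_id']
    refine ⟨v.map g, ?_, e⟩
    rw [Finset.mem_filter]
    refine ⟨hvS, ?_⟩
    have := isRunSorted_map (f := f) (nodup_of_mem_words hvS)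
      (fun x hx y hy => hflt x (mem_of_mem_words hvS hx) y (mem_of_mem_words hvS hy))
    rw [e] at this
    exact this.1 hv.2
  · intro w hw
    rw [Finset.mem_filter] at hw
    rw [des_map w (fun x hx y hy => hflt x (mem_of_mem_words hw.1 hx) y
      (mem_of_mem_words hw.1 hy))]

theorem le_getLast_of_mem_chain : ∀ {r : List ℕ}, r.IsChain (· ≤ ·) → ∀ x ∈ r, ∀ h ∈ r.getLast?, x ≤ h
  | [], _, x, hx, _, _ => by simp at hx
  | [a], _, x, hx, h, hh => by
    simp only [List.mem_singleton] at hx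
    simp only [List.getLast?_singleton, Option.mem_def, Option.some.injEq] at hh
    omega
  | a :: b :: t, hc, x, hx, h, hh => by
    rw [List.getLast?_cons_cons] at hh
    rcases List.isChain_cons_cons.1 hc with ⟨hab, hc'⟩
    rcases List.mem_cons.1 hx with rfl | hx
    · exact hab.trans (le_getLast_of_mem_chain hc' b (by simp) h hh)
    · exact le_getLast_of_mem_chain hc' x hx h hh

theorem sorted_eq_sort {r : List ℕ} (hnd : r.Nodup) (hc : r.IsChain (· ≤ ·)) :
    (r.toFinset).sort (· ≤ ·) = r := by
  exact List.Perm.eq_of_pairwise'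
    (Finset.pairwise_sort _ _) (List.isChain_iff_pairwise.1 hc)
    (List.perm_of_nodup_nodup_toFinset_eq (Finset.sort_nodup _ _) hnd
      (by rw [Finset.sort_toFinset]))

theorem sort_isRunSorted (S : Finset ℕ) : IsRunSorted (S.sort (· ≤ ·)) := by
  rcases h : S.sort (· ≤ ·) with _ | ⟨x, l⟩
  · show runsort [] = []
    simp [runsort, splitRuns]
  · have hc : (S.sort (· ≤ ·)).IsChain (· ≤ ·) := List.isChain_iff_pairwise.2 (S.pairwise_sort _)
    rw [h] at hc
    rw [isRunSorted_iff (by rw [← h]; exact S.sort_nodup _), splitRuns_of_chain _ (by simp) hc]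
    simp

theorem des_sort (S : Finset ℕ) : des (S.sort (· ≤ ·)) = 0 := by
  rcases h : S.sort (· ≤ ·) with _ | ⟨x, l⟩
  · rfl
  · have hc : (S.sort (· ≤ ·)).IsChain (· ≤ ·) := List.isChain_iff_pairwise.2 (S.pairwise_sort _)
    rw [h] at hc
    have := des_add_one (x :: l) (by simp)
    rw [splitRuns_of_chain _ (by simp) hc] at this
    simpa using this

/-- The subsets `T ⊆ S` that can appear as the complement of the first run. -/
def decomp (S : Finset ℕ) : Finset (Finset ℕ) :=
  S.powerset.filter (fun T => (∃ a ∈ S \ T, ∀ b ∈ T, a < b) ∧ (∃ a ∈ S \ T, ∃ b ∈ T, b < a))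

theorem mem_decomp {S T : Finset ℕ} : T ∈ decomp S ↔
    T ⊆ S ∧ (∃ a ∈ S \ T, ∀ b ∈ T, a < b) ∧ (∃ a ∈ S \ T, ∃ b ∈ T, b < a) := by
  rw [decomp, Finset.mem_filter, Finset.mem_powerset]

theorem phi_spec {S T : Finset ℕ} (hTS : T ⊆ S)
    (hc1 : ∃ a ∈ S \ T, ∀ b ∈ T, a < b) (hc2 : ∃ a ∈ S \ T, ∃ b ∈ T, b < a)
    {v : List ℕ} (hvw : v ∈ words T) (hvrs : IsRunSorted v) :
    splitRuns (((S \ T).sort (· ≤ ·)) ++ v) = ((S \ T).sort (· ≤ ·)) :: splitRuns v ∧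
    ((S \ T).sort (· ≤ ·)) ++ v ∈ words S ∧ IsRunSorted (((S \ T).sort (· ≤ ·)) ++ v) ∧
    des (((S \ T).sort (· ≤ ·)) ++ v) = des v + 1 := by
  classical
  set u := (S \ T).sort (· ≤ ·) with hu
  have hvnd : v.Nodup := nodup_of_mem_words hvw
  have hvT : v.toFinset = T := toFinset_of_mem_words hvw
  obtain ⟨a2, ha2, b2, hb2, hba2⟩ := hc2
  have hvne : v ≠ [] := by
    intro hcon
    rw [hcon] at hvT
    simp at hvT
    exact absurd (hvT ▸ hb2) (Finset.notMem_empty b2)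
  rcases hv : v with _ | ⟨v₀, v'⟩
  · exact absurd hv hvne
  rw [← hv]
  have hund : u.Nodup := Finset.sort_nodup _ _
  have huchain : u.IsChain (· ≤ ·) := List.isChain_iff_pairwise.2 (Finset.pairwise_sort _ _)
  have hmemu : ∀ x, x ∈ u ↔ x ∈ S \ T := fun x => Finset.mem_sort _
  have hune : u ≠ [] := by
    intro hcon
    have := (hmemu a2).2 ha2
    rw [hcon] at this
    simp at this
  -- v₀ is the minimum of v
  have hv₀min : ∀ x ∈ v, v₀ = x ∨ v₀ < x := by
    intro x hx
    exact head_lt_of_runSorted hvnd hvrs x hx v₀ (by rw [hv]; rfl)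
  have hv₀v : v₀ ∈ v := by rw [hv]; simp
  have hv₀T : v₀ ∈ T := by rw [← hvT]; exact List.mem_toFinset.2 hv₀v
  have hb2v : b2 ∈ v := by rw [← hvT] at hb2; exact List.mem_toFinset.1 hb2
  have hv₀b2 : v₀ ≤ b2 := by rcases hv₀min b2 hb2v with h | h <;> omega
  -- last of u exceeds v₀
  have hgl : u.getLast hune ∈ u := List.getLast_mem hune
  have hglS : u.getLast hune ∈ S \ T := (hmemu _).1 hgl
  have ha2u : a2 ∈ u := (hmemu a2).2 ha2
  have ha2gl : a2 ≤ u.getLast hune :=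
    le_getLast_of_mem_chain huchain a2 ha2u _ (List.getLast?_eq_getLast hune ▸ rfl)
  have hlt : v₀ < u.getLast hune := by omega
  have hsplit : splitRuns (u ++ v) = u :: splitRuns v := by
    rw [hv]
    apply splitRuns_append u hune huchain v₀ v'
    intro a ha
    rw [List.getLast?_eq_getLast hune] at ha
    simp only [Option.mem_def, Option.some.injEq] at ha
    omega
  -- nodup and membership
  have hdisj : ∀ x ∈ u, x ∉ v := by
    intro x hxu hxv
    have h1 := (hmemu x).1 hxu
    have h2 : x ∈ T := by rw [← hvT]; exact List.mem_toFinset.2 hxv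
    exact (Finset.mem_sdiff.1 h1).2 h2
  have hnd : (u ++ v).Nodup := by
    rw [List.nodup_append]
    exact ⟨hund, hvnd, fun a ha b hb hab => hdisj a ha (hab ▸ hb)⟩
  have hmemS : (u ++ v) ∈ words S := by
    rw [mem_words_iff]
    refine ⟨hnd, ?_⟩
    rw [List.toFinset_append, hu, Finset.sort_toFinset, hvT, Finset.sdiff_union_of_subset hTS]
  -- run-sortedness
  have hrs : IsRunSorted (u ++ v) := by
    rw [isRunSorted_iff hnd, hsplit]
    rw [List.pairwise_cons]
    constructor
    · intro r hr
      obtain ⟨a1, ha1, hall1⟩ := hc1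
      have hrne : r ≠ [] := ne_nil_of_mem_splitRuns hr
      rcases r with _ | ⟨r₀, r'⟩
      · exact absurd rfl hrne
      rcases hu' : u with _ | ⟨u₀, u''⟩
      · exact absurd hu' hune
      have hu₀a1 : u₀ ≤ a1 := by
        refine head_le_of_mem_chain (hu' ▸ huchain) a1 (hu' ▸ (hmemu a1).2 ha1) u₀ rfl
      have hr₀T : r₀ ∈ T := by
        rw [← hvT]
        exact List.mem_toFinset.2 (mem_of_mem_splitRuns hr (by simp))
      have : u₀ < r₀ := lt_of_le_of_lt hu₀a1 (hall1 r₀ hr₀T)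
      exact lexLe_of_head_lt this
    · exact (isRunSorted_iff hvnd).1 hvrs
  refine ⟨hsplit, hmemS, hrs, ?_⟩
  have h1 := des_add_one (u ++ v) (fun hcon => hvne (List.append_eq_nil_iff.1 hcon).2)
  have h2 := des_add_one v hvne
  rw [hsplit] at h1
  simp only [List.length_cons] at h1
  omega

theorem psi_spec {S : Finset ℕ} {w : List ℕ} (hw : w ∈ words S) (hrs : IsRunSorted w)
    (hne : w ≠ S.sort (· ≤ ·)) :
    ∃ T v, T ∈ decomp S ∧ v ∈ words T ∧ IsRunSorted v ∧
      ((S \ T).sort (· ≤ ·)) ++ v = w := by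
  classical
  have hnd : w.Nodup := nodup_of_mem_words hw
  have hwS : w.toFinset = S := toFinset_of_mem_words hw
  have hwne : w ≠ [] := by
    intro hcon
    apply hne
    rw [hcon] at hwS ⊢
    simp at hwS
    rw [← hwS, Finset.sort_empty]
  rcases hwc : w with _ | ⟨w₀, w''⟩
  · exact absurd hwc hwne
  rw [← hwc]
  obtain ⟨r, rest, hsp'⟩ := splitRuns_cons_exists 0 w₀ w''
  have hsp : splitRuns w = r :: rest := by rw [hwc]; exact hsp'
  have hrne : r ≠ [] := ne_nil_of_mem_splitRuns (hsp ▸ List.mem_cons_self)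
  have hrchain : r.IsChain (· ≤ ·) := chain_of_mem_splitRuns (hsp ▸ List.mem_cons_self)
  have hflat : r ++ rest.flatten = w := by
    have := flatten_splitRuns w
    rw [hsp] at this
    simpa using this
  -- rest is nonempty
  rcases hrest : rest with _ | ⟨s, rs⟩
  · exfalso
    apply hne
    rw [hrest] at hflat
    simp only [List.flatten_nil, List.append_nil] at hflat
    subst hflat
    rw [← hwS, sorted_eq_sort hnd hrchain]
  have hsne : s ≠ [] := ne_nil_of_mem_splitRuns (hsp ▸ (hrest ▸ (List.mem_cons_of_mem _ (List.mem_cons_self))))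
  set v : List ℕ := rest.flatten with hvdef
  have hvne : v ≠ [] := by
    rw [hvdef, hrest]
    simp only [List.flatten_cons]
    intro hcon
    exact hsne (List.append_eq_nil_iff.1 hcon).1
  set T : Finset ℕ := v.toFinset with hT
  -- basic membership facts
  have hndapp := hflat ▸ hnd
  rw [List.nodup_append] at hndapp
  obtain ⟨hrnd, hvnd, hdisj⟩ := hndapp
  replace hdisj : ∀ {a}, a ∈ r → a ∈ v → False := fun ha hb => hdisj _ ha _ hb rfl
  have hmemw : ∀ x ∈ v, x ∈ w := by
    intro x hx
    rw [← hflat]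
    exact List.mem_append_right _ hx
  have hTsub : T ⊆ S := by
    intro x hx
    rw [← hwS]
    exact List.mem_toFinset.2 (hmemw x (List.mem_toFinset.1 hx))
  -- the head of w
  have hw₀r : r.head? = some w₀ := by
    have : w = w₀ :: w'' := hwc
    rw [this] at hsp
    exact head?_first_splitRuns hsp
  have hw₀mem : w₀ ∈ r := by
    rcases r with _ | ⟨r₀, r'⟩
    · exact absurd rfl hrne
    · simp only [List.head?_cons, Option.some.injEq] at hw₀r
      rw [hw₀r]
      simp
  have hw₀T : w₀ ∉ T := by
    intro hcon
    exact hdisj hw₀mem (List.mem_toFinset.1 hcon)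
  have hw₀S : w₀ ∈ S := by
    rw [← hwS]
    exact List.mem_toFinset.2 (by rw [← hflat]; exact List.mem_append_left _ hw₀mem)
  have hw₀min : ∀ x ∈ w, w₀ = x ∨ w₀ < x := by
    intro x hx
    exact head_lt_of_runSorted hnd hrs x hx w₀ (by rw [hwc]; rfl)
  -- condition 1
  have hc1 : ∃ a ∈ S \ T, ∀ b ∈ T, a < b := by
    refine ⟨w₀, Finset.mem_sdiff.2 ⟨hw₀S, hw₀T⟩, ?_⟩
    intro b hb
    have hbv : b ∈ v := List.mem_toFinset.1 hb
    rcases hw₀min b (hmemw b hbv) with h | h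
    · exact absurd (h ▸ hb) hw₀T
    · exact h
  -- condition 2 : Rdesc between r and s
  have hdescw := splitRuns_desc w
  rw [hsp, hrest] at hdescw
  have hRrs : Rdesc r s := (List.isChain_cons.1 hdescw).1 s rfl
  rcases hs : s with _ | ⟨s₀, s'⟩
  · exact absurd hs hsne
  have hs₀v : s₀ ∈ v := by
    rw [hvdef, hrest, hs]
    simp
  have hgl := List.getLast_mem hrne
  have hglv : r.getLast hrne ∉ T := fun hcon => hdisj hgl (List.mem_toFinset.1 hcon)
  have hglS : r.getLast hrne ∈ S := by
    rw [← hwS]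
    exact List.mem_toFinset.2 (by rw [← hflat]; exact List.mem_append_left _ hgl)
  have hc2 : ∃ a ∈ S \ T, ∃ b ∈ T, b < a := by
    refine ⟨r.getLast hrne, Finset.mem_sdiff.2 ⟨hglS, hglv⟩, s₀, List.mem_toFinset.2 hs₀v, ?_⟩
    apply hRrs
    · rw [List.getLast?_eq_getLast hrne]; rfl
    · rw [hs]; rfl
  -- splitRuns of v
  have hsubmem : ∀ t ∈ rest, t ∈ splitRuns w := by
    intro t ht
    rw [hsp]
    exact List.mem_cons_of_mem _ ht
  have hsprest : splitRuns v = rest := by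
    rw [hvdef]
    apply splitRuns_flatten
    · exact fun t ht => ne_nil_of_mem_splitRuns (hsubmem t ht)
    · exact fun t ht => chain_of_mem_splitRuns (hsubmem t ht)
    · have := splitRuns_desc w
      rw [hsp] at this
      exact (List.isChain_cons.1 this).2
  -- v is run-sorted
  have hpw := (isRunSorted_iff hnd).1 hrs
  rw [hsp] at hpw
  have hvrs : IsRunSorted v := by
    rw [isRunSorted_iff hvnd, hsprest]
    exact (List.pairwise_cons.1 hpw).2
  have hvwords : v ∈ words T := mem_words_iff.2 ⟨hvnd, rfl⟩
  -- S \ T = r.toFinset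
  have hST : S \ T = r.toFinset := by
    ext x
    simp only [Finset.mem_sdiff, ← hwS, List.mem_toFinset, hT, ← hflat, List.mem_append]
    constructor
    · rintro ⟨h1 | h1, h2⟩
      · exact h1
      · exact absurd h1 h2
    · intro hx
      exact ⟨Or.inl hx, fun hcon => hdisj hx hcon⟩
  refine ⟨T, v, mem_decomp.2 ⟨hTsub, hc1, hc2⟩, hvwords, hvrs, ?_⟩
  rw [hST, sorted_eq_sort hrnd hrchain, hflat]

theorem P_rec (S : Finset ℕ) : P S = 1 + ∑ T ∈ decomp S, Polynomial.X * P T := by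
  classical
  have hsmem : S.sort (· ≤ ·) ∈ (words S).filter IsRunSorted := by
    rw [Finset.mem_filter]
    exact ⟨mem_words.2 (List.Perm.refl _), sort_isRunSorted S⟩
  rw [P, ← Finset.add_sum_erase _ _ hsmem, des_sort, pow_zero]
  congr 1
  have hterm : ∀ T ∈ decomp S, Polynomial.X * P T
      = ∑ v ∈ (words T).filter IsRunSorted, Polynomial.X ^ (des v + 1) := by
    intro T _
    rw [P, Finset.mul_sum]
    exact Finset.sum_congr rfl (fun v _ => (pow_succ' _ _).symm)
  rw [Finset.sum_congr rfl hterm, Finset.sum_sigma']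
  refine (Finset.sum_bij
    (fun (p : (_ : Finset ℕ) × List ℕ) _ => ((S \ p.1).sort (· ≤ ·)) ++ p.2) ?_ ?_ ?_ ?_).symm
  · -- maps into the erase set
    rintro ⟨T, v⟩ hp
    simp only [Finset.mem_sigma] at hp
    obtain ⟨hT, hv⟩ := hp
    rw [Finset.mem_filter] at hv
    obtain ⟨hTS, hc1, hc2⟩ := mem_decomp.1 hT
    obtain ⟨hsplit, hmem, hrs, hdes⟩ := phi_spec hTS hc1 hc2 hv.1 hv.2
    rw [Finset.mem_erase, Finset.mem_filter]
    refine ⟨?_, hmem, hrs⟩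
    intro hcon
    have h0 := des_sort S
    rw [← hcon] at h0
    have h0' : des (((S \ T).sort (· ≤ ·)) ++ v) = 0 := h0
    omega
  · -- injective
    rintro ⟨T₁, v₁⟩ hp₁ ⟨T₂, v₂⟩ hp₂ h
    simp only [Finset.mem_sigma] at hp₁ hp₂
    obtain ⟨hT₁, hv₁⟩ := hp₁
    obtain ⟨hT₂, hv₂⟩ := hp₂
    rw [Finset.mem_filter] at hv₁ hv₂
    obtain ⟨hTS₁, hc1₁, hc2₁⟩ := mem_decomp.1 hT₁
    obtain ⟨hTS₂, hc1₂, hc2₂⟩ := mem_decomp.1 hT₂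
    obtain ⟨hsplit₁, -, -, -⟩ := phi_spec hTS₁ hc1₁ hc2₁ hv₁.1 hv₁.2
    obtain ⟨hsplit₂, -, -, -⟩ := phi_spec hTS₂ hc1₂ hc2₂ hv₂.1 hv₂.2
    simp only at h
    have hru : ((S \ T₁).sort (· ≤ ·)) :: splitRuns v₁
        = ((S \ T₂).sort (· ≤ ·)) :: splitRuns v₂ := by
      rw [← hsplit₁, ← hsplit₂, h]
    have hu : (S \ T₁).sort (· ≤ ·) = (S \ T₂).sort (· ≤ ·) := (List.cons.injEq .. ▸ hru).1
    have hvs : splitRuns v₁ = splitRuns v₂ := (List.cons.injEq .. ▸ hru).2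
    have hveq : v₁ = v₂ := by
      rw [← flatten_splitRuns v₁, ← flatten_splitRuns v₂, hvs]
    have hTeq : T₁ = T₂ := by
      have h1 : S \ T₁ = S \ T₂ := by
        rw [← Finset.sort_toFinset (S \ T₁) (· ≤ ·), ← Finset.sort_toFinset (S \ T₂) (· ≤ ·), hu]
      have := congrArg (fun X => S \ X) h1
      simpa [Finset.sdiff_sdiff_eq_self hTS₁, Finset.sdiff_sdiff_eq_self hTS₂] using this
    subst hTeq
    rw [hveq]
  · -- surjective
    intro w hw
    rw [Finset.mem_erase, Finset.mem_filter] at hw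
    obtain ⟨hne, hmem, hrs⟩ := hw
    obtain ⟨T, v, hT, hvw, hvrs, heq⟩ := psi_spec hmem hrs hne
    refine ⟨⟨T, v⟩, ?_, heq⟩
    rw [Finset.mem_sigma, Finset.mem_filter]
    exact ⟨hT, hvw, hvrs⟩
  · -- values
    rintro ⟨T, v⟩ hp
    simp only [Finset.mem_sigma] at hp
    obtain ⟨hT, hv⟩ := hp
    rw [Finset.mem_filter] at hv
    obtain ⟨hTS, hc1, hc2⟩ := mem_decomp.1 hT
    obtain ⟨-, -, -, hdes⟩ := phi_spec hTS hc1 hc2 hv.1 hv.2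
    simp only
    rw [hdes]

theorem exists_top (S : Finset ℕ) : ∀ i, i ≤ S.card →
    ∃ T, T ⊆ S ∧ T.card = i ∧ ∀ a ∈ S \ T, ∀ b ∈ T, a < b
  | 0, _ => ⟨∅, Finset.empty_subset _, Finset.card_empty, by simp⟩
  | (i+1), hi => by
    obtain ⟨T, hTS, hcard, hprop⟩ := exists_top S i (by omega)
    have hne : (S \ T).Nonempty := by
      rw [← Finset.card_pos, Finset.card_sdiff_of_subset hTS]
      omega
    set a₀ := (S \ T).max' hne with ha₀
    have ha₀S : a₀ ∈ S \ T := (S \ T).max'_mem hne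
    have ha₀T : a₀ ∉ T := (Finset.mem_sdiff.1 ha₀S).2
    refine ⟨insert a₀ T, ?_, ?_, ?_⟩
    · exact Finset.insert_subset (Finset.mem_sdiff.1 ha₀S).1 hTS
    · rw [Finset.card_insert_of_notMem ha₀T, hcard]
    · intro a ha b hb
      have haT : a ∈ S \ T := by
        rw [Finset.mem_sdiff] at ha ⊢
        exact ⟨ha.1, fun hcon => ha.2 (Finset.mem_insert_of_mem hcon)⟩
      rcases Finset.mem_insert.1 hb with rfl | hb
      · have h1 : a ≤ a₀ := (S \ T).le_max' a haT
        have h2 : a ≠ a₀ := fun hcon => (Finset.mem_sdiff.1 ha).2 (hcon ▸ Finset.mem_insert_self _ _)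
        omega
      · exact hprop a haT b hb

theorem unique_top {S T₁ T₂ : Finset ℕ} (h₁ : T₁ ⊆ S) (h₂ : T₂ ⊆ S) (hc : T₁.card = T₂.card)
    (p₁ : ∀ a ∈ S \ T₁, ∀ b ∈ T₁, a < b) (p₂ : ∀ a ∈ S \ T₂, ∀ b ∈ T₂, a < b) : T₁ = T₂ := by
  by_cases hsub : T₁ ⊆ T₂
  · exact Finset.eq_of_subset_of_card_le hsub (le_of_eq hc.symm)
  by_cases hsub' : T₂ ⊆ T₁
  · exact (Finset.eq_of_subset_of_card_le hsub' (le_of_eq hc)).symm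
  exfalso
  obtain ⟨y, hy1, hy2⟩ := Finset.not_subset.1 hsub
  obtain ⟨z, hz1, hz2⟩ := Finset.not_subset.1 hsub'
  have hyz : y < z := p₂ y (Finset.mem_sdiff.2 ⟨h₁ hy1, hy2⟩) z hz1
  have hzy : z < y := p₁ z (Finset.mem_sdiff.2 ⟨h₂ hz1, hz2⟩) y hy1
  omega

theorem card_le_of_mem_decomp {S T : Finset ℕ} (hS : S.Nonempty) (hT : T ∈ decomp S) :
    1 ≤ T.card ∧ T.card ≤ S.card - 1 := by
  obtain ⟨hTS, hc1, hc2⟩ := mem_decomp.1 hT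
  obtain ⟨a1, ha1, hall⟩ := hc1
  obtain ⟨a2, ha2, b2, hb2, hba⟩ := hc2
  constructor
  · rw [Nat.one_le_iff_ne_zero, ← Nat.pos_iff_ne_zero, Finset.card_pos]
    exact ⟨b2, hb2⟩
  · have hsub : T ⊆ S.erase (S.min' hS) := by
      rw [Finset.subset_erase]
      refine ⟨hTS, fun hcon => ?_⟩
      have := hall _ hcon
      have := S.min'_le a1 (Finset.mem_sdiff.1 ha1).1
      omega
    have := Finset.card_le_card hsub
    rw [Finset.card_erase_of_mem (S.min'_mem hS)] at this
    exact this

theorem decomp_card_filter (S : Finset ℕ) (hS : S.Nonempty) (i : ℕ) (hi1 : 1 ≤ i)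
    (hin : i ≤ S.card - 1) :
    ((decomp S).filter (fun T => T.card = i)).card = (S.card - 1).choose i - 1 := by
  classical
  set m := S.min' hS with hm
  set S' := S.erase m with hS'
  have hcardS' : S'.card = S.card - 1 := Finset.card_erase_of_mem (S.min'_mem hS)
  obtain ⟨T₀, hT₀S, hT₀card, hT₀prop⟩ := exists_top S i (by omega)
  have hmT₀ : m ∉ T₀ := by
    intro hcon
    have hne : (S \ T₀).Nonempty := by
      rw [← Finset.card_pos, Finset.card_sdiff_of_subset hT₀S]
      omega
    obtain ⟨a, ha⟩ := hne
    have h1 := hT₀prop a ha m hcon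
    have h2 := S.min'_le a (Finset.mem_sdiff.1 ha).1
    omega
  have hT₀mem : T₀ ∈ S'.powerset.filter (fun T => T.card = i) := by
    rw [Finset.mem_filter, Finset.mem_powerset, hS', Finset.subset_erase]
    exact ⟨⟨hT₀S, hmT₀⟩, hT₀card⟩
  have hset : (decomp S).filter (fun T => T.card = i)
      = (S'.powerset.filter (fun T => T.card = i)) \ {T₀} := by
    ext T
    rw [Finset.mem_filter, Finset.mem_sdiff, Finset.mem_filter, Finset.mem_powerset,
      Finset.mem_singleton, mem_decomp, hS', Finset.subset_erase]
    constructor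
    · rintro ⟨⟨hTS, hc1, hc2⟩, hcard⟩
      obtain ⟨a1, ha1, hall⟩ := hc1
      have hmT : m ∉ T := by
        intro hcon
        have := hall m hcon
        have := S.min'_le a1 (Finset.mem_sdiff.1 ha1).1
        omega
      refine ⟨⟨⟨hTS, hmT⟩, hcard⟩, ?_⟩
      rintro rfl
      obtain ⟨a2, ha2, b2, hb2, hba⟩ := hc2
      have := hT₀prop a2 ha2 b2 hb2
      omega
    · rintro ⟨⟨⟨hTS, hmT⟩, hcard⟩, hneq⟩
      refine ⟨⟨hTS, ?_, ?_⟩, hcard⟩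
      · refine ⟨m, Finset.mem_sdiff.2 ⟨S.min'_mem hS, hmT⟩, ?_⟩
        intro b hb
        have h1 := S.min'_le b (hTS hb)
        have h2 : b ≠ m := fun hcon => hmT (hcon ▸ hb)
        omega
      · by_contra hcon
        push_neg at hcon
        apply hneq
        refine unique_top hTS hT₀S (by omega) ?_ hT₀prop
        intro a ha b hb
        have h1 := hcon a ha b hb
        have h2 : a ≠ b := fun hc => (Finset.mem_sdiff.1 ha).2 (hc ▸ hb)
        omega
  rw [hset, Finset.card_sdiff_of_subset (Finset.singleton_subset_iff.2 hT₀mem), Finset.card_singleton,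
    ← Finset.powersetCard_eq_filter, Finset.card_powersetCard, hcardS']

/-- `A n = 1 + ∑_{i=1}^{n-2} (C(n-1, i) − 1) t A i`. -/
theorem stmt3 (n : ℕ) (hn : 1 ≤ n) :
    A n = 1 + ∑ i ∈ Finset.Icc 1 (n-2),
      Polynomial.C (((n-1).choose i : ℝ) - 1) * Polynomial.X * A i := by
  classical
  set S := Finset.Icc 1 n with hSdef
  have hcard : S.card = n := by rw [hSdef, Nat.card_Icc]; omega
  have hS : S.Nonempty := ⟨1, by rw [hSdef, Finset.mem_Icc]; omega⟩
  rw [A_eq_P, ← hSdef, P_rec]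
  congr 1
  have hPT : ∀ T ∈ decomp S, Polynomial.X * P T = Polynomial.X * A T.card := by
    intro T _
    rw [A_eq_P T.card,
      P_congr (show T.card = (Finset.Icc 1 T.card).card by rw [Nat.card_Icc]; omega)]
  rw [Finset.sum_congr rfl hPT]
  have hmaps : ∀ T ∈ decomp S, T.card ∈ Finset.Icc 1 (n-1) := by
    intro T hT
    have := card_le_of_mem_decomp hS hT
    rw [Finset.mem_Icc]
    omega
  rw [← Finset.sum_fiberwise_of_maps_to hmaps (fun T => Polynomial.X * A T.card)]
  have hfiber : ∀ i ∈ Finset.Icc 1 (n-1),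
      (∑ T ∈ (decomp S).filter (fun T => T.card = i), Polynomial.X * A T.card)
      = Polynomial.C (((n-1).choose i : ℝ) - 1) * Polynomial.X * A i := by
    intro i hi
    rw [Finset.mem_Icc] at hi
    have hstep : ∀ T ∈ (decomp S).filter (fun T => T.card = i),
        Polynomial.X * A T.card = Polynomial.X * A i := by
      intro T hT
      rw [(Finset.mem_filter.1 hT).2]
    rw [Finset.sum_congr rfl hstep, Finset.sum_const,
      decomp_card_filter S hS i hi.1 (by omega), hcard, nsmul_eq_mul]
    have hchoose : 1 ≤ (n-1).choose i := Nat.choose_pos (by omega)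
    rw [Nat.cast_sub hchoose, Nat.cast_one, map_sub, Polynomial.C_1]
    rw [show Polynomial.C (((n-1).choose i : ℕ) : ℝ) = (((n-1).choose i : ℕ) : Polynomial ℝ) by
      simp]
    ring
  rw [Finset.sum_congr rfl hfiber]
  refine (Finset.sum_subset (Finset.Icc_subset_Icc_right (by omega)) ?_).symm
  intro i hi hni
  rw [Finset.mem_Icc] at hi
  rw [Finset.mem_Icc] at hni
  have : i = n - 1 := by omega
  subst this
  rw [Nat.choose_self]
  norm_num
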